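/- The density function x ↦ √(4λ − (x − 1 − λ)²)/(2πλx) on the interval [(1−√λ)², (1+√λ)²] integrates to 1, for any λ ∈ (0,1]. -/

import Mathlib

open Real MeasureTheory

-- F(x) = (√(4λ-(x-1-λ)²) + (1+λ)·arcsin((x-1-λ)/(2s)) - (1-λ)·arcsin(((1+λ)x-(1-λ)²)/(2sx))) / (2πλ)
lemma mp_deriv (lam s : ℝ) (hl0 : 0 < lam) (hl1 : lam ≤ 1) (hs2 : s^2 = lam) (hs0 : 0 < s)
    (x : ℝ) (hxa : (1-s)^2 < x) (hxb : x < (1+s)^2) :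
    HasDerivAt (fun y => (Real.sqrt (4*lam - (y-1-lam)^2)
        + (1+lam) * Real.arcsin ((y-1-lam)/(2*s))
        - (1-lam) * Real.arcsin (((1+lam)*y - (1-lam)^2)/(2*s*y))) / (2*Real.pi*lam))
      (Real.sqrt (4*lam - (x-1-lam)^2) / (2*Real.pi*lam*x)) x := by
  have hx0 : 0 < x := lt_of_le_of_lt (sq_nonneg (1-s)) hxa
  have hg : 0 < 4*lam - (x-1-lam)^2 := by nlinarith [hxa, hxb, hs2]
  set R := Real.sqrt (4*lam - (x-1-lam)^2) with hR_def
  have hR : 0 < R := Real.sqrt_pos.mpr hg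
  have hRR : R^2 = 4*lam - (x-1-lam)^2 := Real.sq_sqrt hg.le
  -- term 1
  have hp : HasDerivAt (fun y : ℝ => 4*lam - (y-1-lam)^2) (-(2*(x-1-lam))) x := by
    have h := (((hasDerivAt_id x).sub_const 1).sub_const lam).pow 2
    simpa using h.const_sub (4*lam)
  have h1 : HasDerivAt (fun y => Real.sqrt (4*lam - (y-1-lam)^2)) ((1+lam-x)/R) x := by
    have := hp.sqrt (by positivity)
    convert this using 1
    rw [← hR_def]
    field_simp
    ring
  -- term 2
  have hu1ne1 : (x-1-lam)/(2*s) ≠ 1 := by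
    intro h; rw [div_eq_iff (by positivity : (2*s) ≠ 0)] at h; nlinarith
  have hu1nem1 : (x-1-lam)/(2*s) ≠ -1 := by
    intro h; rw [div_eq_iff (by positivity : (2*s) ≠ 0)] at h; nlinarith
  have hinner1 : HasDerivAt (fun y : ℝ => (y-1-lam)/(2*s)) (1/(2*s)) x := by
    have h := (((hasDerivAt_id x).sub_const 1).sub_const lam).div_const (2*s)
    simpa using h
  have hsq1 : Real.sqrt (1 - ((x-1-lam)/(2*s))^2) = R/(2*s) := by
    rw [show 1 - ((x-1-lam)/(2*s))^2 = (R/(2*s))^2 by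
      rw [div_pow, div_pow, hRR]; field_simp; nlinarith [hs2]]
    exact Real.sqrt_sq (by positivity)
  have h2 : HasDerivAt (fun y => (1+lam) * Real.arcsin ((y-1-lam)/(2*s))) ((1+lam)/R) x := by
    have h := ((Real.hasDerivAt_arcsin hu1nem1 hu1ne1).comp x hinner1).const_mul (1+lam)
    refine h.congr_deriv (Eq.symm ?_)
    rw [hsq1]
    field_simp
  -- term 3
  have h3 : HasDerivAt (fun y => (1-lam) * Real.arcsin (((1+lam)*y - (1-lam)^2)/(2*s*y)))
      ((1-lam)^2/(x*R)) x := by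
    rcases eq_or_lt_of_le hl1 with hl | hl
    · subst hl
      simp only [sub_self, zero_mul, ne_eq, OfNat.ofNat_ne_zero, not_false_eq_true,
        zero_pow, zero_div]
      exact hasDerivAt_const x 0
    · have hs1 : s < 1 := by nlinarith
      have hden : 2*s*x ≠ 0 := by positivity
      have hN : HasDerivAt (fun y : ℝ => (1+lam)*y - (1-lam)^2) (1+lam) x := by
        have h := ((hasDerivAt_id x).const_mul (1+lam)).sub_const ((1-lam)^2)
        simpa using h
      have hD : HasDerivAt (fun y : ℝ => 2*s*y) (2*s) x := by
        have h := (hasDerivAt_id x).const_mul (2*s)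
        simpa using h
      have hinner2 : HasDerivAt (fun y => ((1+lam)*y - (1-lam)^2)/(2*s*y))
          ((1-lam)^2/(2*s*x^2)) x := by
        have h := hN.div hD hden
        refine h.congr_deriv (Eq.symm ?_)
        field_simp
        ring
      have key : (2*s*x)^2 - ((1+lam)*x-(1-lam)^2)^2
          = (1-lam)^2*(4*lam-(x-1-lam)^2) := by rw [← hs2]; ring
      have hRHSpos : 0 < (1-lam)^2*(4*lam-(x-1-lam)^2) :=
        mul_pos (pow_pos (by linarith) 2) hg
      have hu2sq : (((1+lam)*x-(1-lam)^2)/(2*s*x))^2 < 1 := by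
        rw [div_pow, div_lt_one (by positivity)]
        linarith
      have hu2ne1 : ((1+lam)*x-(1-lam)^2)/(2*s*x) ≠ 1 := by
        intro h; rw [h] at hu2sq; norm_num at hu2sq
      have hu2nem1 : ((1+lam)*x-(1-lam)^2)/(2*s*x) ≠ -1 := by
        intro h; rw [h] at hu2sq; norm_num at hu2sq
      have hsq2 : Real.sqrt (1 - (((1+lam)*x-(1-lam)^2)/(2*s*x))^2) = (1-lam)*R/(2*s*x) := by
        rw [show 1 - (((1+lam)*x-(1-lam)^2)/(2*s*x))^2 = ((1-lam)*R/(2*s*x))^2 by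
          field_simp
          linear_combination (2*lam - lam^2 - 1)*hRR + (4*x^2)*hs2]
        exact Real.sqrt_sq (div_nonneg (mul_nonneg (by linarith) hR.le) (by positivity))
      have h := ((Real.hasDerivAt_arcsin hu2nem1 hu2ne1).comp x hinner2).const_mul (1-lam)
      have hml : (0:ℝ) < 1 - lam := by linarith
      refine h.congr_deriv (Eq.symm ?_)
      rw [hsq2]
      field_simp [hml.ne']
  -- combine
  have hF := ((h1.add h2).sub h3).div_const (2*Real.pi*lam)
  refine hF.congr_deriv (Eq.symm ?_)
  have hpi := Real.pi_ne_zero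
  field_simp
  linear_combination hRR

theorem stmt_0 (lam : ℝ) (hlam : lam ∈ Set.Ioc (0:ℝ) 1) :
    ∫ x in Set.Icc ((1 - Real.sqrt lam)^2) ((1 + Real.sqrt lam)^2),
      Real.sqrt (4 * lam - (x - 1 - lam)^2) / (2 * Real.pi * lam * x) = 1 := by
  obtain ⟨hl0, hl1⟩ := hlam
  set s := Real.sqrt lam with hs_def
  have hs2 : s^2 = lam := Real.sq_sqrt hl0.le
  have hs0 : 0 < s := Real.sqrt_pos.mpr hl0
  have hab : (1-s)^2 ≤ (1+s)^2 := by nlinarith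
  set F := fun y : ℝ => (Real.sqrt (4*lam - (y-1-lam)^2)
        + (1+lam) * Real.arcsin ((y-1-lam)/(2*s))
        - (1-lam) * Real.arcsin (((1+lam)*y - (1-lam)^2)/(2*s*y))) / (2*Real.pi*lam) with hF
  have hderiv : ∀ x ∈ Set.Ioo ((1-s)^2) ((1+s)^2),
      HasDerivAt F (Real.sqrt (4*lam-(x-1-lam)^2)/(2*Real.pi*lam*x)) x :=
    fun x hx => mp_deriv lam s hl0 hl1 hs2 hs0 x hx.1 hx.2
  have hcont : ContinuousOn F (Set.Icc ((1-s)^2) ((1+s)^2)) := by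
    apply ContinuousOn.div_const
    apply ContinuousOn.sub
    · apply ContinuousOn.add
      · exact (Real.continuous_sqrt.comp (by continuity)).continuousOn
      · exact (continuous_const.mul (Real.continuous_arcsin.comp (by continuity))).continuousOn
    · rcases eq_or_lt_of_le hl1 with hl | hl
      · subst hl
        simp only [sub_self, zero_mul]
        exact continuousOn_const
      · have hs1 : s < 1 := by nlinarith
        have ha0 : 0 < (1-s)^2 := pow_pos (by linarith) 2
        apply ContinuousOn.mul continuousOn_const
        apply Real.continuous_arcsin.comp_continuousOn
        apply ContinuousOn.div
        · exact ((continuous_const.mul continuous_id).sub continuous_const).continuousOn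
        · exact (continuous_const.mul continuous_id).continuousOn
        · intro x hx
          have : 0 < x := lt_of_lt_of_le ha0 hx.1
          positivity
  have hnn : ∀ x ∈ Set.Ioo ((1-s)^2) ((1+s)^2),
      0 ≤ Real.sqrt (4*lam-(x-1-lam)^2)/(2*Real.pi*lam*x) := by
    intro x hx
    have hx0 : 0 < x := lt_of_le_of_lt (sq_nonneg (1-s)) hx.1
    have := Real.pi_pos
    positivity
  have hint : IntervalIntegrable (fun x => Real.sqrt (4*lam-(x-1-lam)^2)/(2*Real.pi*lam*x))
      volume ((1-s)^2) ((1+s)^2) := by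
    apply intervalIntegral.intervalIntegrable_deriv_of_nonneg (g := F)
    · rwa [Set.uIcc_of_le hab]
    · rwa [min_eq_left hab, max_eq_right hab]
    · rwa [min_eq_left hab, max_eq_right hab]
  have key := intervalIntegral.integral_eq_sub_of_hasDerivAt_of_le hab hcont hderiv hint
  rw [MeasureTheory.integral_Icc_eq_integral_Ioc, ← intervalIntegral.integral_of_le hab, key]
  have hpi := Real.pi_ne_zero
  have hb : F ((1+s)^2) = 1/2 := by
    rw [hF]
    have e0 : (1+s)^2 - 1 - lam = 2*s := by rw [← hs2]; ring
    have e1 : 4*lam - ((1+s)^2-1-lam)^2 = 0 := by rw [← hs2]; ring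
    have e2 : (1+lam)*(1+s)^2 - (1-lam)^2 = 2*s*(1+s)^2 := by rw [← hs2]; ring
    have h2s : (2*s : ℝ) ≠ 0 := by positivity
    have h2sb : (2*s*(1+s)^2 : ℝ) ≠ 0 := by positivity
    simp only [e0, e2]
    rw [show 4*lam - (2*s)^2 = 0 by rw [← hs2]; ring, Real.sqrt_zero, div_self h2s,
      div_self h2sb, Real.arcsin_one]
    field_simp
    ring
  have ha : F ((1-s)^2) = -(1/2) := by
    rw [hF]
    have e0 : (1-s)^2 - 1 - lam = -(2*s) := by rw [← hs2]; ring
    have e1 : 4*lam - ((1-s)^2-1-lam)^2 = 0 := by rw [← hs2]; ring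
    have h2s : (2*s : ℝ) ≠ 0 := by positivity
    have em1 : (-(2*s))/(2*s) = (-1 : ℝ) := by rw [neg_div, div_self h2s]
    rcases eq_or_lt_of_le hl1 with hl | hl
    · subst hl
      simp only [e0, sub_self, zero_mul]
      rw [show 4*(1:ℝ) - (-(2*s))^2 = 0 by rw [← hs2]; ring, Real.sqrt_zero, em1,
        Real.arcsin_neg_one]
      field_simp
      ring
    · have hs1 : s < 1 := by nlinarith
      have hA : (0:ℝ) < 2*s*(1-s)^2 := mul_pos (by linarith) (pow_pos (by linarith) 2)
      have e2 : (1+lam)*(1-s)^2 - (1-lam)^2 = -(2*s*(1-s)^2) := by rw [← hs2]; ring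
      have em2 : (-(2*s*(1-s)^2))/(2*s*(1-s)^2) = (-1 : ℝ) := by rw [neg_div, div_self hA.ne']
      simp only [e0, e2]
      rw [show 4*lam - (-(2*s))^2 = 0 by rw [← hs2]; ring, Real.sqrt_zero, em1, em2,
        Real.arcsin_neg_one]
      field_simp
      ring
  rw [hb, ha]
  norm_num
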